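/- Under the same setting, if moreover m > 2 and all first and second partial derivatives of theta vanish at 0 (together with theta(0) = 0), then with nu = min(m-2, 1) there exists D > 0 such that for all large k: every partial derivative of theta_k = theta ∘ D_k of order <= floor(m) is bounded by D * 2^{-k(2+nu)} on tilde{Gamma}_0, and every partial derivative of order floor(m) has tau-Hölder seminorm at most D * 2^{-k(2+nu)} on tilde{Gamma}_0. -/

import Mathlib

set_option maxHeartbeats 1000000

open Metric Set


noncomputable def w {n : ℕ} (x : ℝ × EuclideanSpace ℝ (Fin n)) : ℂ :=
  -Complex.I * (x.1 : ℂ) + (‖x.2‖ : ℂ) ^ 2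

/-- The anisotropic dyadic scaling `D_k(x₁, x') = (x₁/4^k, x'/2^k)`. -/
noncomputable def Dk {n : ℕ} (k : ℕ) (x : ℝ × EuclideanSpace ℝ (Fin n)) :
    ℝ × EuclideanSpace ℝ (Fin n) :=
  (x.1 / (4 : ℝ) ^ k, ((2 : ℝ) ^ k)⁻¹ • x.2)

/-- `Γ̃₀ = {x : 1/8 ≤ |w x| ≤ 2}`. -/
def GammaTilde0 {n : ℕ} : Set (ℝ × EuclideanSpace ℝ (Fin n)) :=
  {x | (1 / 8 : ℝ) ≤ ‖w x‖ ∧ ‖w x‖ ≤ 2}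

noncomputable def DkL (n : ℕ) (k : ℕ) :
    (ℝ × EuclideanSpace ℝ (Fin n)) →L[ℝ] (ℝ × EuclideanSpace ℝ (Fin n)) :=
  (((4:ℝ)^k)⁻¹ • ContinuousLinearMap.id ℝ ℝ).prodMap
    ((((2:ℝ)^k)⁻¹) • ContinuousLinearMap.id ℝ (EuclideanSpace ℝ (Fin n)))

lemma DkL_apply {n : ℕ} (k : ℕ) (x : ℝ × EuclideanSpace ℝ (Fin n)) :
    DkL n k x = Dk k x := by
  simp [DkL, Dk, div_eq_inv_mul, Prod.ext_iff]

lemma DkL_norm_le (n k : ℕ) : ‖DkL n k‖ ≤ ((2:ℝ)^k)⁻¹ := by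
  apply ContinuousLinearMap.opNorm_le_bound _ (by positivity)
  intro x
  have h4 : ((4:ℝ)^k)⁻¹ ≤ ((2:ℝ)^k)⁻¹ := by
    apply inv_anti₀ (by positivity)
    exact pow_le_pow_left₀ (by norm_num) (by norm_num) k
  have hx1 : |x.1| ≤ ‖x‖ := by
    rw [Prod.norm_def]; exact le_max_of_le_left (le_of_eq (Real.norm_eq_abs x.1).symm)
  have hx2 : ‖x.2‖ ≤ ‖x‖ := by rw [Prod.norm_def]; exact le_max_right _ _
  rw [show (DkL n k) x = (((4:ℝ)^k)⁻¹ • x.1, ((2:ℝ)^k)⁻¹ • x.2) by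
    simp [DkL, Prod.ext_iff]]
  rw [Prod.norm_def]
  apply max_le
  · simp only [norm_smul, norm_inv, norm_pow, Real.norm_ofNat, Real.norm_eq_abs]
    calc ((4:ℝ)^k)⁻¹ * |x.1| ≤ ((2:ℝ)^k)⁻¹ * ‖x‖ := by
          apply mul_le_mul h4 hx1 (abs_nonneg _) (by positivity)
      _ = _ := rfl
  · simp only [norm_smul, norm_inv, norm_pow, Real.norm_ofNat]
    exact mul_le_mul_of_nonneg_left hx2 (by positivity)

lemma norm_le_two_of_mem {n : ℕ} {x : ℝ × EuclideanSpace ℝ (Fin n)}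
    (hx : x ∈ GammaTilde0) : ‖x‖ ≤ 2 := by
  obtain ⟨-, h2⟩ := hx
  have hre : (w x).re = ‖x.2‖^2 := by simp [w, ← Complex.ofReal_pow]
  have him : (w x).im = -x.1 := by simp [w, ← Complex.ofReal_pow]
  have h1 : |x.1| ≤ 2 := by
    have h := Complex.abs_im_le_norm (w x)
    rw [him, abs_neg] at h; linarith
  have h2' : ‖x.2‖^2 ≤ 2 := by
    have h := Complex.re_le_norm (w x)
    rw [hre] at h; linarith
  have h2'' : ‖x.2‖ ≤ 2 := by nlinarith [norm_nonneg x.2]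
  rw [Prod.norm_def]
  exact max_le (by rwa [Real.norm_eq_abs]) h2''

lemma mvt_decay {E F : Type*} [NormedAddCommGroup E] [NormedSpace ℝ E]
    [NormedAddCommGroup F] [NormedSpace ℝ F] {r : ℝ} {f : E → F}
    (hd : DifferentiableOn ℝ f (Metric.ball 0 r)) (hf0 : f 0 = 0)
    {C ν : ℝ} (hC : 0 ≤ C) (hν : 0 < ν)
    (hb : ∀ z ∈ Metric.ball (0:E) r, ‖fderivWithin ℝ f (Metric.ball 0 r) z‖ ≤ C * ‖z‖ ^ ν) :
    ∀ y ∈ Metric.ball (0:E) r, ‖f y‖ ≤ (2:ℝ) ^ ν * C * ‖y‖ ^ (ν + 1) := by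
  intro y hy
  rcases eq_or_ne y 0 with rfl | hy0
  · simp [hf0, Real.zero_rpow (by positivity : ν + 1 ≠ 0)]
  have hy' : ‖y‖ < r := mem_ball_zero_iff.mp hy
  have hy0' : (0:ℝ) < ‖y‖ := norm_pos_iff.mpr hy0
  set t := Metric.ball (0:E) (min (2*‖y‖) r) with ht
  have htsub : t ⊆ Metric.ball (0:E) r := Metric.ball_subset_ball (min_le_right _ _)
  have h0t : (0:E) ∈ t := Metric.mem_ball_self (lt_min (by linarith) (by linarith))
  have hyt : y ∈ t := mem_ball_zero_iff.mpr (lt_min (by linarith) hy')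
  have key : ∀ z ∈ t, ‖fderivWithin ℝ f t z‖ ≤ C * (2*‖y‖) ^ ν := by
    intro z hz
    rw [fderivWithin_of_isOpen Metric.isOpen_ball hz,
      ← fderivWithin_of_isOpen Metric.isOpen_ball (htsub hz)]
    refine (hb z (htsub hz)).trans ?_
    have hz2 : ‖z‖ ≤ 2*‖y‖ := le_of_lt (lt_of_lt_of_le (mem_ball_zero_iff.mp hz) (min_le_left _ _))
    exact mul_le_mul_of_nonneg_left
      (Real.rpow_le_rpow (norm_nonneg _) hz2 hν.le) hC
  have hmv := (convex_ball (0:E) _).norm_image_sub_le_of_norm_fderivWithin_le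
    (hd.mono htsub) key h0t hyt
  rw [hf0, sub_zero, sub_zero] at hmv
  calc ‖f y‖ ≤ C * (2*‖y‖) ^ ν * ‖y‖ := hmv
    _ = (2:ℝ) ^ ν * C * ‖y‖ ^ (ν + 1) := by
        rw [Real.mul_rpow (by norm_num) (norm_nonneg y), Real.rpow_add hy0', Real.rpow_one]
        ring

/-- If `θ ∈ C_b^m(B_r)` with `m > 2`, `θ 0 = 0`, and all first and second derivatives of
`θ` vanish at `0`, then with `ν = min(m-2,1)` there is `D > 0` such that for all `k` with
`D_k(Γ̃₀) ⊆ B_r`, the derivatives of `θ_k = θ ∘ D_k` of order `≤ ⌊m⌋` are bounded by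
`D·2^{-k(2+ν)}` on `Γ̃₀`, and those of order `⌊m⌋` are `(m-⌊m⌋)`-Hölder with constant
`D·2^{-k(2+ν)}`. -/
theorem stmt16 {n : ℕ} (hn : 1 ≤ n) (r : ℝ) (hr : 0 < r) (m : ℝ) (hm : 2 < m)
    (θ : ℝ × EuclideanSpace ℝ (Fin n) → ℂ)
    (hreg : ContDiffOn ℝ (⌊m⌋₊ : ℕ) θ (Metric.ball 0 r))
    (hbdd : ∀ i ≤ ⌊m⌋₊, ∃ M : ℝ,
      ∀ x ∈ Metric.ball (0 : ℝ × EuclideanSpace ℝ (Fin n)) r,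
        ‖iteratedFDerivWithin ℝ i θ (Metric.ball 0 r) x‖ ≤ M)
    (hHol : ∃ H : ℝ, ∀ x ∈ Metric.ball (0 : ℝ × EuclideanSpace ℝ (Fin n)) r,
      ∀ y ∈ Metric.ball (0 : ℝ × EuclideanSpace ℝ (Fin n)) r,
        ‖iteratedFDerivWithin ℝ (⌊m⌋₊) θ (Metric.ball 0 r) x
          - iteratedFDerivWithin ℝ (⌊m⌋₊) θ (Metric.ball 0 r) y‖
          ≤ H * ‖x - y‖ ^ (m - ⌊m⌋₊))
    (hθ0 : θ 0 = 0)
    (hθ1 : fderivWithin ℝ θ (Metric.ball 0 r) 0 = 0)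
    (hθ2 : iteratedFDerivWithin ℝ 2 θ (Metric.ball 0 r) 0 = 0) :
    ∃ D > (0 : ℝ), ∀ k : ℕ,
      (∀ x ∈ GammaTilde0 (n := n), Dk k x ∈ Metric.ball (0 : ℝ × EuclideanSpace ℝ (Fin n)) r) →
      (∀ i ≤ ⌊m⌋₊, ∀ x ∈ GammaTilde0 (n := n),
        ‖iteratedFDerivWithin ℝ i (fun y => θ (Dk k y)) (Dk k ⁻¹' Metric.ball 0 r) x‖
          ≤ D * (2 : ℝ) ^ (-(k : ℝ) * (2 + min (m - 2) 1))) ∧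
      (∀ x ∈ GammaTilde0 (n := n), ∀ y ∈ GammaTilde0 (n := n),
        ‖iteratedFDerivWithin ℝ (⌊m⌋₊) (fun z => θ (Dk k z)) (Dk k ⁻¹' Metric.ball 0 r) x
          - iteratedFDerivWithin ℝ (⌊m⌋₊) (fun z => θ (Dk k z)) (Dk k ⁻¹' Metric.ball 0 r) y‖
          ≤ D * (2 : ℝ) ^ (-(k : ℝ) * (2 + min (m - 2) 1)) * ‖x - y‖ ^ (m - ⌊m⌋₊)) := by
  classical
  set s : Set (ℝ × EuclideanSpace ℝ (Fin n)) := Metric.ball 0 r with hs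
  have hsu : UniqueDiffOn ℝ s := Metric.isOpen_ball.uniqueDiffOn
  set N := ⌊m⌋₊ with hNdef
  have hm0 : (0:ℝ) ≤ m := by linarith
  have hN2 : 2 ≤ N := Nat.le_floor (by exact_mod_cast hm.le)
  have hNm : (N:ℝ) ≤ m := Nat.floor_le hm0
  have hτ0 : (0:ℝ) ≤ m - N := by linarith
  set ν := min (m-2) 1 with hνdef
  have hν0 : 0 < ν := lt_min (by linarith) one_pos
  have hν1 : ν ≤ 1 := min_le_right _ _
  have hmν : 2 + ν ≤ m := by
    have := min_le_left (m-2) 1; linarith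
  have h0s : (0 : ℝ × EuclideanSpace ℝ (Fin n)) ∈ s := Metric.mem_ball_self hr
  -- uniform bound B
  choose M hM using hbdd
  set Bf : ℕ → ℝ := fun i => if h : i ≤ N then max (M i h) 0 else 0 with hBf
  set B : ℝ := ∑ i ∈ Finset.range (N+1), Bf i with hBdef
  have hBf0 : ∀ i, 0 ≤ Bf i := by
    intro i; rw [hBf]; dsimp only; split
    · exact le_max_right _ _
    · exact le_rfl
  have hB0 : 0 ≤ B := Finset.sum_nonneg fun i _ => hBf0 i
  have hBi : ∀ i, ∀ h : i ≤ N, ∀ z ∈ s, ‖iteratedFDerivWithin ℝ i θ s z‖ ≤ B := by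
    intro i h z hz
    calc ‖iteratedFDerivWithin ℝ i θ s z‖ ≤ M i h := hM i h z hz
      _ ≤ Bf i := by rw [hBf]; dsimp only; rw [dif_pos h]; exact le_max_left _ _
      _ ≤ B := Finset.single_le_sum (fun j _ => hBf0 j) (Finset.mem_range.mpr (by omega))
  -- Hölder constant
  obtain ⟨H, hH⟩ := hHol
  set H' := max H 0 with hH'def
  have hH'0 : 0 ≤ H' := le_max_right _ _
  have hH' : ∀ x ∈ s, ∀ y ∈ s,
      ‖iteratedFDerivWithin ℝ N θ s x - iteratedFDerivWithin ℝ N θ s y‖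
        ≤ H' * ‖x - y‖ ^ (m - N) := fun x hx y hy =>
    (hH x hx y hy).trans (mul_le_mul_of_nonneg_right (le_max_left _ _)
      (Real.rpow_nonneg (norm_nonneg _) _))
  -- E2
  obtain ⟨C₂, hC₂0, hE2⟩ : ∃ C₂, 0 ≤ C₂ ∧ ∀ y ∈ s,
      ‖iteratedFDerivWithin ℝ 2 θ s y‖ ≤ C₂ * ‖y‖ ^ ν := by
    rcases eq_or_lt_of_le hN2 with h2 | h3
    · refine ⟨H', hH'0, fun y hy => ?_⟩
      have hm3 : m < 3 := by
        have := Nat.lt_floor_add_one m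
        rw [← hNdef, ← h2] at this
        norm_num at this; linarith
      have hνeq : ν = m - 2 := min_eq_left (by linarith)
      have h := hH' y hy 0 h0s
      rw [← h2] at h
      rw [hθ2, sub_zero, sub_zero] at h
      refine h.trans (le_of_eq ?_)
      congr 1
      rw [hνeq]; norm_num
    · have hνeq : ν = 1 := min_eq_right (by
        have : (3:ℝ) ≤ N := by exact_mod_cast h3
        linarith)
      refine ⟨B, hB0, fun y hy => ?_⟩
      have hdiff : DifferentiableOn ℝ (iteratedFDerivWithin ℝ 2 θ s) s :=
        hreg.differentiableOn_iteratedFDerivWithin (by exact_mod_cast h3) hsu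
      have hb3 : ∀ z ∈ s, ‖fderivWithin ℝ (iteratedFDerivWithin ℝ 2 θ s) s z‖ ≤ B := by
        intro z hz
        rw [norm_fderivWithin_iteratedFDerivWithin]
        exact hBi 3 h3 z hz
      have hmv := (convex_ball _ _).norm_image_sub_le_of_norm_fderivWithin_le hdiff hb3 h0s hy
      rw [hθ2, sub_zero, sub_zero] at hmv
      rw [hνeq, Real.rpow_one]; exact hmv
  -- E1
  have hd1 : DifferentiableOn ℝ (iteratedFDerivWithin ℝ 1 θ s) s :=
    hreg.differentiableOn_iteratedFDerivWithin (by exact_mod_cast (by omega : 1 < N)) hsu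
  have h10 : iteratedFDerivWithin ℝ 1 θ s 0 = 0 := by
    ext mv
    rw [iteratedFDerivWithin_one_apply (hsu 0 h0s), hθ1]
    rfl
  have hb2' : ∀ z ∈ s, ‖fderivWithin ℝ (iteratedFDerivWithin ℝ 1 θ s) s z‖ ≤ C₂ * ‖z‖ ^ ν := by
    intro z hz
    rw [norm_fderivWithin_iteratedFDerivWithin]
    exact hE2 z hz
  have hE1 := mvt_decay hd1 h10 hC₂0 hν0 hb2'
  set C₁ : ℝ := (2:ℝ) ^ ν * C₂ with hC₁def
  have hC₁0 : 0 ≤ C₁ := mul_nonneg (Real.rpow_nonneg (by norm_num) _) hC₂0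
  -- E0
  have hdθ : DifferentiableOn ℝ θ s :=
    hreg.differentiableOn (by exact_mod_cast (by omega : N ≠ 0))
  have hb1' : ∀ z ∈ s, ‖fderivWithin ℝ θ s z‖ ≤ C₁ * ‖z‖ ^ (ν + 1) := by
    intro z hz
    have hnrm : ‖fderivWithin ℝ θ s z‖ = ‖iteratedFDerivWithin ℝ 1 θ s z‖ := by
      rw [← norm_iteratedFDerivWithin_fderivWithin (n := 0) hsu hz,
        norm_iteratedFDerivWithin_zero]
    rw [hnrm]; exact hE1 z hz
  have hE0 := mvt_decay hdθ hθ0 hC₁0 (by linarith : (0:ℝ) < ν + 1) hb1'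
  set C₀ : ℝ := (2:ℝ) ^ (ν+1) * C₁ with hC₀def
  have hC₀0 : 0 ≤ C₀ := mul_nonneg (Real.rpow_nonneg (by norm_num) _) hC₁0
  -- final constant
  refine ⟨8*(C₀+C₁+C₂) + B + H' + 1, by positivity, fun k hk => ?_⟩
  set D : ℝ := 8*(C₀+C₁+C₂) + B + H' + 1 with hDdef
  set L := DkL n k with hLdef
  set q : ℝ := ((2:ℝ)^k)⁻¹ with hqdef
  have hq0 : 0 < q := by positivity
  have hq1 : q ≤ 1 := by
    rw [hqdef]
    exact inv_le_one_of_one_le₀ (one_le_pow₀ (by norm_num))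
  have hL : ‖L‖ ≤ q := DkL_norm_le n k
  have hDkL : Dk (n := n) k = ⇑L := funext fun x => (DkL_apply k x).symm
  have hsk : (Dk (n := n) k ⁻¹' s) = ⇑L ⁻¹' s := by rw [hDkL]
  have hsku : UniqueDiffOn ℝ (⇑L ⁻¹' s) :=
    (Metric.isOpen_ball.preimage L.continuous).uniqueDiffOn
  have hfun : (fun y => θ (Dk (n := n) k y)) = θ ∘ ⇑L := by rw [hDkL]; rfl
  set T : ℝ := (2 : ℝ) ^ (-(k : ℝ) * (2 + ν)) with hTdef
  have hT0 : 0 < T := Real.rpow_pos_of_pos (by norm_num) _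
  have hq2 : q = (2:ℝ) ^ (-(k:ℝ)) := by
    rw [hqdef, Real.rpow_neg (by norm_num), Real.rpow_natCast]
  have hqT : q ^ (2+ν) = T := by
    rw [hq2, hTdef, ← Real.rpow_mul (by norm_num : (0:ℝ) ≤ 2)]
  have hx2q : ∀ x ∈ GammaTilde0 (n := n), ‖L x‖ ≤ 2 * q := by
    intro x hx
    calc ‖L x‖ ≤ ‖L‖ * ‖x‖ := L.le_opNorm x
      _ ≤ q * 2 := mul_le_mul hL (norm_le_two_of_mem hx) (norm_nonneg _) hq0.le
      _ = 2 * q := mul_comm _ _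
  have key : ∀ (i : ℕ) (C e a : ℝ), 0 ≤ C → 0 ≤ a → a ≤ C * (2*q) ^ e → 0 ≤ e → e ≤ 3 →
      e + i = 2 + ν → a * q ^ i ≤ (8*C) * T := by
    intro i C e a hC ha hae he0 he3 hei
    have hsplit : (2*q)^e = (2:ℝ)^e * q^e := Real.mul_rpow (by norm_num) hq0.le
    have hqq : q^e * (q:ℝ)^i = T := by
      rw [← Real.rpow_natCast q i, ← Real.rpow_add hq0, hei, hqT]
    have h8 : (2:ℝ)^e ≤ 8 := by
      have h := Real.rpow_le_rpow_of_exponent_le (by norm_num : (1:ℝ) ≤ 2) he3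
      rwa [show ((2:ℝ)^(3:ℝ)) = 8 by
        rw [show (3:ℝ) = ((3:ℕ):ℝ) by norm_num, Real.rpow_natCast]; norm_num] at h
    have h2e0 : (0:ℝ) ≤ (2:ℝ)^e := Real.rpow_nonneg (by norm_num) e
    calc a * q ^ i ≤ (C * (2*q)^e) * q ^ i :=
          mul_le_mul_of_nonneg_right hae (pow_nonneg hq0.le i)
      _ = (C * (2:ℝ)^e) * (q^e * (q:ℝ)^i) := by rw [hsplit]; ring
      _ = (C * (2:ℝ)^e) * T := by rw [hqq]
      _ ≤ (8*C) * T := mul_le_mul_of_nonneg_right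
            ((mul_le_mul_of_nonneg_left h8 hC).trans_eq (mul_comm C 8)) hT0.le
  have hcomp : ∀ (i : ℕ)
      (A : ContinuousMultilinearMap ℝ (fun _ : Fin i => ℝ × EuclideanSpace ℝ (Fin n)) ℂ),
      ‖A.compContinuousLinearMap (fun _ => L)‖ ≤ ‖A‖ * q ^ i := by
    intro i A
    refine (ContinuousMultilinearMap.norm_compContinuousLinearMap_le _ _).trans ?_
    have hprod : (∏ _j : Fin i, ‖L‖) ≤ q ^ i := by
      rw [Finset.prod_const, Finset.card_univ, Fintype.card_fin]
      exact pow_le_pow_left₀ (norm_nonneg _) hL i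
    exact mul_le_mul_of_nonneg_left hprod (norm_nonneg _)
  constructor
  · intro i hi x hx
    have hxs : L x ∈ s := by have h := hk x hx; rwa [hDkL] at h
    have hrw := L.iteratedFDerivWithin_comp_right (f := θ) hreg hsu hsku hxs
      (i := i) (by exact_mod_cast hi)
    rw [hfun, hsk, hrw]
    refine (hcomp i _).trans ?_
    have hDge : ∀ c : ℝ, c ≤ D → c * T ≤ D * T := fun c hc =>
      mul_le_mul_of_nonneg_right hc hT0.le
    rcases i with _ | _ | _ | j
    · refine (key 0 C₀ (ν+1+1) _ hC₀0 (norm_nonneg _) ?_ (by linarith) (by linarith)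
        (by push_cast; ring)).trans (hDge _ (by linarith))
      rw [norm_iteratedFDerivWithin_zero]
      exact (hE0 _ hxs).trans (mul_le_mul_of_nonneg_left
        (Real.rpow_le_rpow (norm_nonneg _) (hx2q x hx) (by linarith)) hC₀0)
    · refine (key 1 C₁ (ν+1) _ hC₁0 (norm_nonneg _) ?_ (by linarith) (by linarith)
        (by push_cast; ring)).trans (hDge _ (by linarith))
      exact (hE1 _ hxs).trans (mul_le_mul_of_nonneg_left
        (Real.rpow_le_rpow (norm_nonneg _) (hx2q x hx) (by linarith)) hC₁0)
    · refine (key 2 C₂ ν _ hC₂0 (norm_nonneg _) ?_ (by linarith) (by linarith)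
        (by push_cast; ring)).trans (hDge _ (by linarith))
      exact (hE2 _ hxs).trans (mul_le_mul_of_nonneg_left
        (Real.rpow_le_rpow (norm_nonneg _) (hx2q x hx) (by linarith)) hC₂0)
    · have hb := hBi (j+3) (by omega) (L x) hxs
      calc ‖iteratedFDerivWithin ℝ (j+3) θ s (L x)‖ * q ^ (j+3)
          ≤ B * q ^ (j+3) := mul_le_mul_of_nonneg_right hb (pow_nonneg hq0.le _)
        _ ≤ B * q ^ (3:ℕ) :=
            mul_le_mul_of_nonneg_left (pow_le_pow_of_le_one hq0.le hq1 (by omega)) hB0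
        _ = B * q ^ ((3:ℕ):ℝ) := by rw [Real.rpow_natCast]
        _ ≤ B * q ^ (2+ν) := mul_le_mul_of_nonneg_left
            (Real.rpow_le_rpow_of_exponent_ge hq0 hq1 (by push_cast; linarith)) hB0
        _ = B * T := by rw [hqT]
        _ ≤ D * T := hDge _ (by linarith)
  · intro x hx y hy
    have hxs : L x ∈ s := by have h := hk x hx; rwa [hDkL] at h
    have hys : L y ∈ s := by have h := hk y hy; rwa [hDkL] at h
    have hrwx := L.iteratedFDerivWithin_comp_right (f := θ) hreg hsu hsku hxs
      (i := N) le_rfl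
    have hrwy := L.iteratedFDerivWithin_comp_right (f := θ) hreg hsu hsku hys
      (i := N) le_rfl
    rw [hfun, hsk, hrwx, hrwy]
    have hsub : (iteratedFDerivWithin ℝ N θ s (L x)).compContinuousLinearMap (fun _ => L)
        - (iteratedFDerivWithin ℝ N θ s (L y)).compContinuousLinearMap (fun _ => L)
        = (iteratedFDerivWithin ℝ N θ s (L x)
            - iteratedFDerivWithin ℝ N θ s (L y)).compContinuousLinearMap (fun _ => L) := by
      rw [← ContinuousMultilinearMap.compContinuousLinearMapL_apply,
        ← ContinuousMultilinearMap.compContinuousLinearMapL_apply,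
        ← ContinuousMultilinearMap.compContinuousLinearMapL_apply, ← map_sub]
    rw [hsub]
    refine (hcomp N _).trans ?_
    have hd := hH' (L x) hxs (L y) hys
    have hLxy : ‖L x - L y‖ ≤ q * ‖x - y‖ := by
      rw [← map_sub]
      exact (L.le_opNorm _).trans (mul_le_mul_of_nonneg_right hL (norm_nonneg _))
    have hr1 : ‖L x - L y‖ ^ (m - (N:ℝ)) ≤ q^(m-(N:ℝ)) * ‖x-y‖^(m-(N:ℝ)) := by
      refine (Real.rpow_le_rpow (norm_nonneg _) hLxy hτ0).trans ?_
      rw [Real.mul_rpow hq0.le (norm_nonneg _)]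
    calc ‖iteratedFDerivWithin ℝ N θ s (L x) - iteratedFDerivWithin ℝ N θ s (L y)‖ * q ^ N
        ≤ (H' * (q^(m-(N:ℝ)) * ‖x-y‖^(m-(N:ℝ)))) * q ^ N :=
          mul_le_mul_of_nonneg_right (hd.trans (mul_le_mul_of_nonneg_left hr1 hH'0))
            (pow_nonneg hq0.le _)
      _ = H' * q^((m-(N:ℝ)) + (N:ℝ)) * ‖x-y‖^(m-(N:ℝ)) := by
          rw [Real.rpow_add hq0, ← Real.rpow_natCast q N]; ring
      _ = H' * q^m * ‖x-y‖^(m-(N:ℝ)) := by ring_nf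
      _ ≤ H' * q^(2+ν) * ‖x-y‖^(m-(N:ℝ)) :=
          mul_le_mul_of_nonneg_right
            (mul_le_mul_of_nonneg_left (Real.rpow_le_rpow_of_exponent_ge hq0 hq1 hmν) hH'0)
            (Real.rpow_nonneg (norm_nonneg _) _)
      _ = H' * T * ‖x-y‖^(m-(N:ℝ)) := by rw [hqT]
      _ ≤ D * T * ‖x-y‖^(m-(N:ℝ)) :=
          mul_le_mul_of_nonneg_right (mul_le_mul_of_nonneg_right (by linarith) hT0.le)
            (Real.rpow_nonneg (norm_nonneg _) _)
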